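/- Two standard cosets $wW_J$ and $w'W_{J'}$ of a Coxeter system $(W,S)$ give $\operatorname{conv}(wW_J \cdot h) = \operatorname{conv}(w'W_{J'} \cdot h)$ (for $h$ in the open fundamental chamber of the associated Weyl group action) if and only if $J = J'$ and $w^{-1}w' \in W_J$, i.e. if and only if $wW_J = w'W_{J'}$ as cosets. -/

import Mathlib

open scoped Pointwise

/-- The Coxeter matrix entry attached to a product `a_ij * a_ji` of entries of a
generalized Cartan matrix, via the standard table (`0` encodes `∞`). -/
def gcmCoxeterEntry (p : ℤ) : ℕ :=
  if p = 0 then 2 else if p = 1 then 3 else if p = 2 then 4 else if p = 3 then 6 else 0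

/-- The Weyl group of a symmetrizable generalized Cartan matrix, together with its action
on the real Cartan subalgebra of a free and cofree Kac–Moody root datum. -/
structure KMWeyl (n : ℕ) (V : Type*) [AddCommGroup V] [Module ℝ V]
    (W : Type*) [Group W] (M : CoxeterMatrix (Fin n)) where
  /-- the generalized Cartan matrix -/
  A : Matrix (Fin n) (Fin n) ℤ
  diag : ∀ i, A i i = 2
  offDiag : ∀ i j, i ≠ j → A i j ≤ 0
  zeroIff : ∀ i j, (A i j = 0 ↔ A j i = 0)
  symmetrizable : ∃ D B : Matrix (Fin n) (Fin n) ℝ, D.IsDiag ∧ B.IsSymm ∧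
    A.map (Int.cast : ℤ → ℝ) = D * B
  coxMat : ∀ i j, i ≠ j → M i j = gcmCoxeterEntry (A i j * A j i)
  /-- the Coxeter system structure on the Weyl group -/
  cs : CoxeterSystem M W
  /-- the linear action of the Weyl group on the Cartan subalgebra -/
  ρ : W →* (V →ₗ[ℝ] V)
  /-- the simple roots -/
  α : Fin n → (V →ₗ[ℝ] ℝ)
  /-- the simple coroots -/
  cor : Fin n → V
  pairing : ∀ i j, α j (cor i) = (A i j : ℝ)
  refl : ∀ i v, ρ (cs.simple i) v = v - α i v • cor i
  freeRoots : LinearIndependent ℝ α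
  cofree : LinearIndependent ℝ cor

namespace KMWeyl

variable {n : ℕ} {V : Type*} [AddCommGroup V] [Module ℝ V]
  {W : Type*} [Group W] {M : CoxeterMatrix (Fin n)}

/-- The orbit of a point `h` under the Weyl group. -/
def orb (K : KMWeyl n V W M) (h : V) : Set V := Set.range fun w => K.ρ w h

/-- The standard subgroup generated by the simple reflections indexed by `J`. -/
def std (K : KMWeyl n V W M) (J : Set (Fin n)) : Subgroup W :=
  Subgroup.closure (K.cs.simple '' J)

/-- The support of `w`: the indices occurring in every reduced word for `w`. -/
def supp (K : KMWeyl n V W M) (w : W) : Set (Fin n) :=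
  {i | ∀ l : List (Fin n), K.cs.wordProd l = w → l.length = K.cs.length w → i ∈ l}

end KMWeyl

/-- The subset `conv(wW_J · h)` of `Ξ_h` attached to the standard coset `wW_J`. -/
def cosetFace {n : ℕ} {V : Type*} [AddCommGroup V] [Module ℝ V]
    {W : Type*} [Group W] {M : CoxeterMatrix (Fin n)} (K : KMWeyl n V W M)
    (h : V) (w : W) (J : Set (Fin n)) : Set V :=
  convexHull ℝ ((fun u => K.ρ u h) '' ((fun x => w * x) '' (K.std J : Set W)))

/-! ### Auxiliary development -/

namespace KMAux

open CoxeterSystem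

/-- Coefficient sequence for the action of alternating words on a simple coroot. -/
def coef (p q : ℝ) : ℕ → ℝ × ℝ
  | 0 => (1, 0)
  | (k+1) =>
    let c := coef p q k
    if Even k then (c.1, p * c.1 - c.2) else (q * c.2 - c.1, c.2)

lemma coef_zero (p q : ℝ) : coef p q 0 = (1, 0) := rfl

lemma coef_succ (p q : ℝ) (k : ℕ) :
    coef p q (k+1) = if Even k then ((coef p q k).1, p * (coef p q k).1 - (coef p q k).2)
      else (q * (coef p q k).2 - (coef p q k).1, (coef p q k).2) := rfl

lemma coef_nonneg_fin (p q : ℝ) (hp : 0 ≤ p) (hq : 0 ≤ q) (k : ℕ)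
    (h : (p * q = 0 ∧ k < 2) ∨ (p * q = 1 ∧ k < 3) ∨ (p * q = 2 ∧ k < 4) ∨
      (p * q = 3 ∧ k < 6)) :
    0 ≤ (coef p q k).1 ∧ 0 ≤ (coef p q k).2 := by
  obtain ⟨hc, hk⟩ | ⟨hc, hk⟩ | ⟨hc, hk⟩ | ⟨hc, hk⟩ := h <;>
  [ (have F2 : p * q * p = 0 * p := by linear_combination p * hc);
    (have F2 : p * q * p = 1 * p := by linear_combination p * hc);
    (have F2 : p * q * p = 2 * p := by linear_combination p * hc);
    (have F2 : p * q * p = 3 * p := by linear_combination p * hc)] <;>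
  [ (have F3 : q * p * q = 0 * q := by linear_combination q * hc);
    (have F3 : q * p * q = 1 * q := by linear_combination q * hc);
    (have F3 : q * p * q = 2 * q := by linear_combination q * hc);
    (have F3 : q * p * q = 3 * q := by linear_combination q * hc)] <;>
  [ (have F5 : p * q * p * q * p = 0 * p := by nlinarith [F2, hc, sq_nonneg p]);
    (have F5 : p * q * p * q * p = 1 * p := by linear_combination (p*q*p + 1*p) * hc);
    (have F5 : p * q * p * q * p = 4 * p := by linear_combination (p*q*p + 2*p) * hc);
    (have F5 : p * q * p * q * p = 9 * p := by linear_combination (p*q*p + 3*p) * hc)] <;>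
  interval_cases k <;>
  simp only [coef_succ, coef_zero, Nat.even_iff] <;> norm_num <;>
  first
    | (constructor <;> nlinarith [hc, hp, hq, F2, F3, F5, mul_nonneg hp hq])
    | nlinarith [hc, hp, hq, F2, F3, F5, mul_nonneg hp hq]

lemma coef_nonneg_big (p q : ℝ) (hp : 0 ≤ p) (hq : 0 ≤ q) (hc : 4 ≤ p * q) (k : ℕ) :
    0 ≤ (coef p q k).1 ∧ 0 ≤ (coef p q k).2 := by
  suffices H : ∀ k, (0 ≤ (coef p q k).1 ∧ 0 ≤ (coef p q k).2) ∧
      (Even k → 2 * (coef p q k).2 ≤ p * (coef p q k).1) ∧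
      (¬ Even k → 2 * (coef p q k).1 ≤ q * (coef p q k).2) from (H k).1
  intro k
  induction k with
  | zero =>
    refine ⟨⟨by norm_num [coef_zero], by norm_num [coef_zero]⟩, fun _ => ?_,
      fun hcon => absurd Even.zero hcon⟩
    simp only [coef_zero]
    norm_num
    linarith
  | succ k ih =>
    obtain ⟨⟨ha, hb⟩, he, ho⟩ := ih
    by_cases hk : Even k
    · have h2 := he hk
      have hk1 : ¬ Even (k+1) := by simp [Nat.even_add_one, hk]
      rw [coef_succ, if_pos hk]
      refine ⟨⟨ha, by simp only; nlinarith⟩, fun hcon => absurd hcon hk1, fun _ => ?_⟩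
      simp only
      nlinarith [mul_le_mul_of_nonneg_left h2 hq, mul_nonneg (sub_nonneg.2 hc) ha]
    · have h2 := ho hk
      have hk1 : Even (k+1) := Nat.even_add_one.2 hk
      rw [coef_succ, if_neg hk]
      refine ⟨⟨by simp only; nlinarith, hb⟩, fun _ => ?_, fun hcon => absurd hk1 hcon⟩
      simp only
      nlinarith [mul_le_mul_of_nonneg_left h2 hp, mul_nonneg (sub_nonneg.2 hc) hb]

variable {n : ℕ} {V : Type*} [AddCommGroup V] [Module ℝ V]
  {W : Type*} [Group W] {M : CoxeterMatrix (Fin n)} (K : KMWeyl n V W M)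

/-- The cone of nonnegative combinations of simple coroots. -/
def cone : Set V :=
  {x | ∃ c : Fin n → ℝ, (∀ l, 0 ≤ c l) ∧ x = ∑ l, c l • K.cor l}

lemma cone_add {x y : V} (hx : x ∈ cone K) (hy : y ∈ cone K) : x + y ∈ cone K := by
  obtain ⟨c, hc, rfl⟩ := hx
  obtain ⟨d, hd, rfl⟩ := hy
  exact ⟨c + d, fun l => add_nonneg (hc l) (hd l), by
    simp [add_smul, Finset.sum_add_distrib]⟩

lemma cone_smul {t : ℝ} (ht : 0 ≤ t) {x : V} (hx : x ∈ cone K) : t • x ∈ cone K := by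
  obtain ⟨c, hc, rfl⟩ := hx
  exact ⟨fun l => t * c l, fun l => mul_nonneg ht (hc l), by
    simp [Finset.smul_sum, smul_smul]⟩

lemma cor_mem_cone (i : Fin n) : K.cor i ∈ cone K := by
  refine ⟨fun l => if l = i then 1 else 0, fun l => by positivity, ?_⟩
  simp [ite_smul]

lemma rho_simple_cor (i j : Fin n) :
    K.ρ (K.cs.simple j) (K.cor i) = K.cor i - (K.A i j : ℝ) • K.cor j := by
  rw [K.refl, K.pairing]

lemma rho_inv_apply (w : W) (x : V) : K.ρ w⁻¹ (K.ρ w x) = x := by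
  rw [← Module.End.mul_apply, ← map_mul, inv_mul_cancel, map_one, Module.End.one_apply]

lemma rho_ne_zero {w : W} {x : V} (hx : x ≠ 0) : K.ρ w x ≠ 0 := by
  intro hcon
  apply hx
  have := rho_inv_apply K w x
  rw [hcon, map_zero] at this
  exact this.symm

/-- The action of an alternating word on a simple coroot, in coordinates. -/
lemma repAlt (i j : Fin n) (k : ℕ) :
    K.ρ (K.cs.wordProd (alternatingWord i j k)) (K.cor i)
      = (coef (-(K.A i j : ℝ)) (-(K.A j i : ℝ)) k).1 • K.cor i
        + (coef (-(K.A i j : ℝ)) (-(K.A j i : ℝ)) k).2 • K.cor j := by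
  induction k with
  | zero => simp [alternatingWord, coef_zero]
  | succ k ih =>
    rw [alternatingWord_succ', K.cs.wordProd_cons, map_mul, Module.End.mul_apply, ih,
      coef_succ]
    set a := (coef (-(K.A i j : ℝ)) (-(K.A j i : ℝ)) k).1
    set b := (coef (-(K.A i j : ℝ)) (-(K.A j i : ℝ)) k).2
    by_cases hk : Even k
    · rw [if_pos hk, if_pos hk]
      have h1 : K.ρ (K.cs.simple j) (K.cor i) = K.cor i - (K.A i j : ℝ) • K.cor j :=
        rho_simple_cor K i j
      have h2 : K.ρ (K.cs.simple j) (K.cor j) = K.cor j - (2 : ℝ) • K.cor j := by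
        rw [rho_simple_cor K j j, K.diag]; norm_num
      rw [map_add, map_smul, map_smul, h1, h2]
      simp only
      module
    · rw [if_neg hk, if_neg hk]
      have h1 : K.ρ (K.cs.simple i) (K.cor j) = K.cor j - (K.A j i : ℝ) • K.cor i :=
        rho_simple_cor K j i
      have h2 : K.ρ (K.cs.simple i) (K.cor i) = K.cor i - (2 : ℝ) • K.cor i := by
        rw [rho_simple_cor K i i, K.diag]; norm_num
      rw [map_add, map_smul, map_smul, h1, h2]
      simp only
      module

/-- Positivity of the coefficients in the admissible range. -/
lemma rank2coef (i j : Fin n) (hij : i ≠ j) (k : ℕ) (hk : M i j = 0 ∨ k < M i j) :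
    0 ≤ (coef (-(K.A i j : ℝ)) (-(K.A j i : ℝ)) k).1 ∧
      0 ≤ (coef (-(K.A i j : ℝ)) (-(K.A j i : ℝ)) k).2 := by
  set p : ℝ := -(K.A i j : ℝ) with hp_def
  set q : ℝ := -(K.A j i : ℝ) with hq_def
  have hp : 0 ≤ p := by
    have := K.offDiag i j hij
    simp only [hp_def, neg_nonneg]
    exact_mod_cast this
  have hq : 0 ≤ q := by
    have := K.offDiag j i (Ne.symm hij)
    simp only [hq_def, neg_nonneg]
    exact_mod_cast this
  have hpq : p * q = ((K.A i j * K.A j i : ℤ) : ℝ) := by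
    simp only [hp_def, hq_def]; push_cast; ring
  have hm := K.coxMat i j hij
  set e : ℤ := K.A i j * K.A j i with he_def
  have he : 0 ≤ e := by nlinarith [K.offDiag i j hij, K.offDiag j i hij.symm]
  unfold gcmCoxeterEntry at hm
  split_ifs at hm with h0 h1 h2 h3
  · rcases hk with hk | hk
    · rw [hm] at hk; omega
    · rw [hm] at hk
      exact coef_nonneg_fin p q hp hq k (Or.inl ⟨by rw [hpq, h0]; norm_num, hk⟩)
  · rcases hk with hk | hk
    · rw [hm] at hk; omega
    · rw [hm] at hk
      exact coef_nonneg_fin p q hp hq k (Or.inr (Or.inl ⟨by rw [hpq, h1]; norm_num, hk⟩))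
  · rcases hk with hk | hk
    · rw [hm] at hk; omega
    · rw [hm] at hk
      exact coef_nonneg_fin p q hp hq k
        (Or.inr (Or.inr (Or.inl ⟨by rw [hpq, h2]; norm_num, hk⟩)))
  · rcases hk with hk | hk
    · rw [hm] at hk; omega
    · rw [hm] at hk
      exact coef_nonneg_fin p q hp hq k
        (Or.inr (Or.inr (Or.inr ⟨by rw [hpq, h3]; norm_num, hk⟩)))
  · have h4 : (4 : ℤ) ≤ e := by omega
    exact coef_nonneg_big p q hp hq (by rw [hpq]; exact_mod_cast h4) k

/-- Strip right descents in `{i, j}` from `w`. -/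
lemma strip (i j : Fin n) : ∀ N : ℕ, ∀ w : W, K.cs.length w ≤ N →
    ∃ v : W, ∃ ω : List (Fin n), (∀ a ∈ ω, a = i ∨ a = j) ∧ w = v * K.cs.wordProd ω ∧
      K.cs.length w = K.cs.length v + ω.length ∧
      ¬ K.cs.IsRightDescent v i ∧ ¬ K.cs.IsRightDescent v j := by
  intro N
  induction N with
  | zero =>
    intro w hw
    have hw1 : w = 1 := K.cs.length_eq_zero_iff.mp (Nat.le_zero.mp hw)
    subst hw1
    exact ⟨1, [], by simp, by simp, by simp, K.cs.not_isRightDescent_one i,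
      K.cs.not_isRightDescent_one j⟩
  | succ N IH =>
    intro w hw
    by_cases hdi : K.cs.IsRightDescent w i
    · have hlen : K.cs.length (w * K.cs.simple i) + 1 = K.cs.length w := by
        rcases K.cs.length_mul_simple w i with h | h
        · exact absurd hdi (by simp [CoxeterSystem.IsRightDescent, h])
        · exact h
      obtain ⟨v, ω, h1, h2, h3, h4, h5⟩ := IH (w * K.cs.simple i) (by omega)
      refine ⟨v, ω.concat i, ?_, ?_, ?_, h4, h5⟩
      · intro a ha
        rw [List.concat_eq_append, List.mem_append] at ha
        rcases ha with ha | ha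
        · exact h1 a ha
        · left; simpa using ha
      · rw [K.cs.wordProd_concat, ← mul_assoc, ← h2, CoxeterSystem.simple_mul_simple_cancel_right]
      · rw [List.length_concat]; omega
    by_cases hdj : K.cs.IsRightDescent w j
    · have hlen : K.cs.length (w * K.cs.simple j) + 1 = K.cs.length w := by
        rcases K.cs.length_mul_simple w j with h | h
        · exact absurd hdj (by simp [CoxeterSystem.IsRightDescent, h])
        · exact h
      obtain ⟨v, ω, h1, h2, h3, h4, h5⟩ := IH (w * K.cs.simple j) (by omega)
      refine ⟨v, ω.concat j, ?_, ?_, ?_, h4, h5⟩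
      · intro a ha
        rw [List.concat_eq_append, List.mem_append] at ha
        rcases ha with ha | ha
        · exact h1 a ha
        · right; simpa using ha
      · rw [K.cs.wordProd_concat, ← mul_assoc, ← h2, CoxeterSystem.simple_mul_simple_cancel_right]
      · rw [List.length_concat]; omega
    · exact ⟨w, [], by simp, by simp, by simp, hdi, hdj⟩

/-- Multiplying an alternating word product by a fitting simple reflection. -/
lemma alt_cons (i j a : Fin n) (hij : i ≠ j) (ha : a = i ∨ a = j) (k : ℕ) :
    ∃ k' ≤ k + 1,
      K.cs.simple a * K.cs.wordProd (alternatingWord i j k) =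
          K.cs.wordProd (alternatingWord i j k') ∨
        K.cs.simple a * K.cs.wordProd (alternatingWord i j k) =
          K.cs.wordProd (alternatingWord j i k') := by
  have step : ∀ m : ℕ, K.cs.wordProd (alternatingWord i j (m+1)) =
      K.cs.simple (if Even m then j else i) * K.cs.wordProd (alternatingWord i j m) := by
    intro m
    rw [alternatingWord_succ', K.cs.wordProd_cons]
  cases k with
  | zero =>
    rcases ha with rfl | rfl
    · refine ⟨1, by omega, Or.inr ?_⟩
      simp [alternatingWord]
    · refine ⟨1, by omega, Or.inl ?_⟩
      simp [alternatingWord]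
  | succ k =>
    by_cases hax : a = (if Even k then j else i)
    · refine ⟨k, by omega, Or.inl ?_⟩
      rw [step k, hax, CoxeterSystem.simple_mul_simple_cancel_left]
    · have hax' : a = (if Even (k+1) then j else i) := by
        rcases ha with rfl | rfl <;> by_cases hk : Even k <;>
          simp_all [Nat.even_add_one]
      refine ⟨k + 2, by omega, Or.inl ?_⟩
      rw [step (k+1), hax']

/-- Every `{i,j}`-word equals an alternating word product. -/
lemma altNormal (i j : Fin n) (hij : i ≠ j) :
    ∀ ω : List (Fin n), (∀ a ∈ ω, a = i ∨ a = j) →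
      ∃ k ≤ ω.length, K.cs.wordProd ω = K.cs.wordProd (alternatingWord i j k) ∨
        K.cs.wordProd ω = K.cs.wordProd (alternatingWord j i k) := by
  intro ω
  induction ω with
  | nil => exact fun _ => ⟨0, by simp, Or.inl (by simp [alternatingWord])⟩
  | cons a ω ih =>
    intro hmem
    obtain ⟨k, hk, hor⟩ := ih (fun b hb => hmem b (List.mem_cons_of_mem a hb))
    have ha : a = i ∨ a = j := hmem a List.mem_cons_self
    rcases hor with h | h
    · obtain ⟨k', hk', hor'⟩ := alt_cons K i j a hij ha k
      refine ⟨k', by simpa using Nat.le_trans hk' (by omega), ?_⟩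
      rwa [K.cs.wordProd_cons, h]
    · obtain ⟨k', hk', hor'⟩ := alt_cons K j i a hij.symm (ha.symm) k
      refine ⟨k', by simpa using Nat.le_trans hk' (by omega), ?_⟩
      rw [K.cs.wordProd_cons, h]
      exact hor'.symm

/-- Periodicity of alternating word products. -/
lemma alt_period (i j : Fin n) (k : ℕ) :
    K.cs.wordProd (alternatingWord i j (k + 2 * M i j)) =
      K.cs.wordProd (alternatingWord i j k) := by
  have hpow := K.cs.simple_mul_simple_pow i j
  rw [K.cs.prod_alternatingWord_eq_mul_pow, K.cs.prod_alternatingWord_eq_mul_pow]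
  have hev : Even (k + 2 * M i j) ↔ Even k := by simp [Nat.even_add]
  have hdiv : (k + 2 * M i j) / 2 = k / 2 + M i j := by omega
  rw [hdiv, pow_add, hpow, mul_one]
  congr 1
  simp [hev]

/-- Tits' positivity theorem: if `i` is not a right descent of `w`, then `w` maps the
coroot `cor i` into the nonnegative cone. -/
lemma pos : ∀ N : ℕ, ∀ w : W, ∀ i : Fin n, K.cs.length w ≤ N →
    ¬ K.cs.IsRightDescent w i → K.ρ w (K.cor i) ∈ cone K := by
  intro N
  induction N with
  | zero =>
    intro w i hw _
    have hw1 : w = 1 := K.cs.length_eq_zero_iff.mp (Nat.le_zero.mp hw)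
    subst hw1
    simpa using cor_mem_cone K i
  | succ N IH =>
    intro w i hw hdi
    by_cases hw1 : w = 1
    · subst hw1; simpa using cor_mem_cone K i
    obtain ⟨j, hdj⟩ := K.cs.exists_rightDescent_of_ne_one hw1
    have hij : i ≠ j := fun hcon => hdi (hcon ▸ hdj)
    obtain ⟨v, ω, hmem, hw_eq, hlen_eq, hvi, hvj⟩ := strip K i j (K.cs.length w) w le_rfl
    classical
    set u := K.cs.wordProd ω with hu_def
    have hωne : ω ≠ [] := by
      rintro rfl
      apply hvj
      have hwv : w = v := by
        rw [hw_eq, hu_def, K.cs.wordProd_nil, mul_one]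
      rwa [← hwv]
    have hωpos : 1 ≤ ω.length := List.length_pos_iff.mpr hωne
    have hu1 : u ≠ 1 := by
      intro hcon
      apply hvj
      have hwv : w = v := by rw [hw_eq, hcon, mul_one]
      rwa [← hwv]
    have hP : ∃ k : ℕ, u = K.cs.wordProd (alternatingWord i j k) ∨
        u = K.cs.wordProd (alternatingWord j i k) := by
      obtain ⟨k, _, hor⟩ := altNormal K i j hij ω hmem
      exact ⟨k, hor⟩
    set k₀ := Nat.find hP with hk₀_def
    have hspec := Nat.find_spec hP
    rw [← hk₀_def] at hspec
    have hk₀_le : k₀ ≤ ω.length := by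
      obtain ⟨k, hk, hor⟩ := altNormal K i j hij ω hmem
      exact Nat.le_trans (Nat.find_min' hP hor) hk
    have hk₀_pos : 1 ≤ k₀ := by
      rcases Nat.eq_zero_or_pos k₀ with h0 | h
      · exfalso
        rw [h0] at hspec
        apply hu1
        rcases hspec with h | h <;> simpa [alternatingWord] using h
      · exact h
    -- `u` cannot end (as alternating word) with `i`
    have keyNot : u ≠ K.cs.wordProd (alternatingWord j i k₀) := by
      intro hEq
      have hconc : alternatingWord j i k₀ = (alternatingWord i j (k₀ - 1)).concat i := by
        obtain ⟨k₁, hk₁⟩ : ∃ k₁, k₀ = k₁ + 1 := ⟨k₀ - 1, by omega⟩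
        rw [hk₁]
        simp [alternatingWord_succ]
      have husi : u * K.cs.simple i = K.cs.wordProd (alternatingWord i j (k₀ - 1)) := by
        rw [hEq, hconc, K.cs.wordProd_concat, CoxeterSystem.simple_mul_simple_cancel_right]
      have hlt : K.cs.length (w * K.cs.simple i) < K.cs.length w := by
        have hws : w * K.cs.simple i = v * K.cs.wordProd (alternatingWord i j (k₀ - 1)) := by
          rw [hw_eq, mul_assoc, husi]
        calc K.cs.length (w * K.cs.simple i)
            ≤ K.cs.length v + K.cs.length (K.cs.wordProd (alternatingWord i j (k₀ - 1))) := by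
              rw [hws]; exact K.cs.length_mul_le _ _
          _ ≤ K.cs.length v + (k₀ - 1) := by
              have hle := K.cs.length_wordProd_le (alternatingWord i j (k₀ - 1))
              rw [length_alternatingWord] at hle
              omega
          _ < K.cs.length v + ω.length := by omega
          _ = K.cs.length w := hlen_eq.symm
      exact hdi hlt
    have hu_alt : u = K.cs.wordProd (alternatingWord i j k₀) := by
      rcases hspec with h | h
      · exact h
      · exact absurd h keyNot
    -- the admissible range
    have hbound : M i j = 0 ∨ k₀ < M i j := by
      by_contra hcon
      push_neg at hcon
      obtain ⟨hm0, hge⟩ := hcon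
      set m := M i j with hm_def
      have hMM : M.M i j = m := rfl
      rcases Nat.lt_or_ge (2 * m) k₀ with hbig | hsmall
      · -- reduce by periodicity
        have hper := alt_period K i j (k₀ - 2 * m)
        rw [show k₀ - 2 * m + 2 * M.M i j = k₀ from by omega] at hper
        exact Nat.find_min hP (by omega : k₀ - 2 * m < k₀)
          (Or.inl (by rw [hu_alt, ← hper]))
      · rcases Nat.eq_or_lt_of_le hge with hEq | hlt
        · -- k₀ = m : the word also ends in i
          apply keyNot
          rw [hu_alt]
          have hsub := K.cs.prod_alternatingWord_eq_prod_alternatingWord_sub i j k₀ (by omega)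
          rw [hsub, show M.M i j * 2 - k₀ = k₀ from by omega]
        · -- m < k₀ ≤ 2m : shorter representation of the other kind
          have := K.cs.prod_alternatingWord_eq_prod_alternatingWord_sub i j k₀ (by omega)
          have hu' : u = K.cs.wordProd (alternatingWord j i (m * 2 - k₀)) := by
            rw [hu_alt, this]
          exact Nat.find_min hP (by omega : m * 2 - k₀ < k₀) (Or.inr hu')
    obtain ⟨ha, hb⟩ := rank2coef K i j hij k₀ hbound
    have hrep : K.ρ u (K.cor i)
        = (coef (-(K.A i j : ℝ)) (-(K.A j i : ℝ)) k₀).1 • K.cor i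
          + (coef (-(K.A i j : ℝ)) (-(K.A j i : ℝ)) k₀).2 • K.cor j := by
      rw [hu_alt]; exact repAlt K i j k₀
    have hsplit : K.ρ w (K.cor i)
        = (coef (-(K.A i j : ℝ)) (-(K.A j i : ℝ)) k₀).1 • K.ρ v (K.cor i)
          + (coef (-(K.A i j : ℝ)) (-(K.A j i : ℝ)) k₀).2 • K.ρ v (K.cor j) := by
      rw [hw_eq, map_mul, Module.End.mul_apply, hrep, map_add, map_smul, map_smul]
    have hvlen : K.cs.length v ≤ N := by omega
    rw [hsplit]
    exact cone_add K (cone_smul K ha (IH v i hvlen hvi)) (cone_smul K hb (IH v j hvlen hvj))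

/-- A linear functional taking the value `1` on every simple coroot. -/
lemma exists_functional : ∃ f : V →ₗ[ℝ] ℝ, ∀ l, f (K.cor l) = 1 := by
  have hli : LinearIndepOn ℝ id (Set.range K.cor) :=
    K.cofree.linearIndepOn_id
  let b := Module.Basis.extend hli
  refine ⟨b.constr ℝ (fun _ => (1 : ℝ)), fun l => ?_⟩
  have hmem : K.cor l ∈ hli.extend (Set.subset_univ _) :=
    hli.subset_extend _ ⟨l, rfl⟩
  have hb : (b ⟨K.cor l, hmem⟩ : V) = K.cor l := Module.Basis.extend_apply_self hli ⟨_, hmem⟩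
  calc (b.constr ℝ (fun _ => (1 : ℝ))) (K.cor l)
      = (b.constr ℝ (fun _ => (1 : ℝ))) (b ⟨K.cor l, hmem⟩) := by rw [hb]
    _ = 1 := b.constr_basis ℝ _ _

lemma functional_nonneg {f : V →ₗ[ℝ] ℝ} (hf : ∀ l, f (K.cor l) = 1) {x : V}
    (hx : x ∈ cone K) : 0 ≤ f x := by
  obtain ⟨c, hc, rfl⟩ := hx
  rw [map_sum]
  refine Finset.sum_nonneg fun l _ => ?_
  rw [map_smul, hf, smul_eq_mul, mul_one]
  exact hc l

lemma functional_pos {f : V →ₗ[ℝ] ℝ} (hf : ∀ l, f (K.cor l) = 1) {x : V}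
    (hx : x ∈ cone K) (hx0 : x ≠ 0) : 0 < f x := by
  obtain ⟨c, hc, rfl⟩ := hx
  have hsum : f (∑ l, c l • K.cor l) = ∑ l, c l := by
    rw [map_sum]
    congr 1
    ext l
    rw [map_smul, hf, smul_eq_mul, mul_one]
  rw [hsum]
  have hnn : ∀ l ∈ Finset.univ, 0 ≤ c l := fun l _ => hc l
  rcases eq_or_lt_of_le (Finset.sum_nonneg hnn) with h0 | hlt
  · exfalso
    apply hx0
    have hall := (Finset.sum_eq_zero_iff_of_nonneg hnn).mp h0.symm
    exact Finset.sum_eq_zero fun l hl => by rw [hall l hl, zero_smul]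
  · exact hlt

variable (h : V)

/-- Strict decrease of the functional along nontrivial orbit points. -/
lemma functional_strict (hC : ∀ i, 0 < K.α i h) {f : V →ₗ[ℝ] ℝ}
    (hf : ∀ l, f (K.cor l) = 1) :
    ∀ N : ℕ, ∀ w : W, K.cs.length w ≤ N → w ≠ 1 → f (K.ρ w h) < f h := by
  intro N
  induction N with
  | zero =>
    intro w hw hw1
    exact absurd (K.cs.length_eq_zero_iff.mp (Nat.le_zero.mp hw)) hw1
  | succ N IH =>
    intro w hw hw1
    obtain ⟨i, hdi⟩ := K.cs.exists_rightDescent_of_ne_one hw1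
    set w' := w * K.cs.simple i with hw'_def
    have hcan : w' * K.cs.simple i = w := by
      rw [hw'_def, CoxeterSystem.simple_mul_simple_cancel_right]
    have hlen : K.cs.length w' + 1 = K.cs.length w := by
      rcases K.cs.length_mul_simple w i with hh | hh
      · exact absurd hdi (by simp [CoxeterSystem.IsRightDescent, hw'_def, hh])
      · exact hh
    have hnd : ¬ K.cs.IsRightDescent w' i := by
      intro hcon
      unfold CoxeterSystem.IsRightDescent at hcon
      rw [hcan] at hcon
      omega
    have hpos := pos K (K.cs.length w') w' i le_rfl hnd
    have hne : K.ρ w' (K.cor i) ≠ 0 := by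
      apply rho_ne_zero
      intro hcon
      have := K.pairing i i
      rw [hcon, map_zero, K.diag] at this
      norm_num at this
    have hfpos : 0 < f (K.ρ w' (K.cor i)) := functional_pos K hf hpos hne
    have hkey : K.ρ w h = K.ρ w' h - K.α i h • K.ρ w' (K.cor i) := by
      rw [← hcan, map_mul, Module.End.mul_apply, K.refl, map_sub, map_smul]
    have hgoal : f (K.ρ w h) = f (K.ρ w' h) - K.α i h * f (K.ρ w' (K.cor i)) := by
      rw [hkey, map_sub, map_smul, smul_eq_mul]
    by_cases hw'1 : w' = 1
    · have hone : f (K.ρ w' h) = f h := by rw [hw'1, map_one, Module.End.one_apply]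
      rw [hgoal, hone]
      nlinarith [hC i]
    · have hIH := IH w' (by omega) hw'1
      rw [hgoal]
      nlinarith [hC i]

/-- Injectivity of the orbit map. -/
lemma orbit_inj (hC : ∀ i, 0 < K.α i h) {f : V →ₗ[ℝ] ℝ}
    (hf : ∀ l, f (K.cor l) = 1) {u v : W} (huv : K.ρ u h = K.ρ v h) : u = v := by
  by_contra hne
  have h1 : u⁻¹ * v ≠ 1 := by
    intro hcon
    exact hne (inv_mul_eq_one.mp hcon)
  have h2 : K.ρ (u⁻¹ * v) h = h := by
    rw [map_mul, Module.End.mul_apply, ← huv, rho_inv_apply]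
  have := functional_strict K h hC hf (K.cs.length (u⁻¹ * v)) (u⁻¹ * v) le_rfl h1
  rw [h2] at this
  exact lt_irrefl _ this

/-- Convex hull separation: the orbit map sends distinct cosets to distinct hulls. -/
lemma hull_subset_coset (hC : ∀ i, 0 < K.α i h) {f : V →ₗ[ℝ] ℝ}
    (hf : ∀ l, f (K.cor l) = 1) {A B : Set W}
    (hAB : convexHull ℝ ((fun u => K.ρ u h) '' A) ⊆ convexHull ℝ ((fun u => K.ρ u h) '' B)) :
    A ⊆ B := by
  intro u hu
  by_contra hub
  set g : V →ₗ[ℝ] ℝ := f ∘ₗ (K.ρ u⁻¹) with hg_def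
  have hx : K.ρ u h ∈ convexHull ℝ ((fun u => K.ρ u h) '' B) :=
    hAB (subset_convexHull ℝ _ ⟨u, hu, rfl⟩)
  have hhalf : ((fun u => K.ρ u h) '' B) ⊆ {x | g x < f h} := by
    rintro y ⟨b, hb, rfl⟩
    have hbu : u⁻¹ * b ≠ 1 := by
      intro hcon
      obtain rfl := inv_mul_eq_one.mp hcon
      exact hub hb
    have : g (K.ρ b h) = f (K.ρ (u⁻¹ * b) h) := by
      rw [hg_def, LinearMap.comp_apply, map_mul, Module.End.mul_apply]
    rw [Set.mem_setOf_eq, this]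
    exact functional_strict K h hC hf _ _ le_rfl hbu
  have hcvx : Convex ℝ {x | g x < f h} := convex_halfSpace_lt (LinearMap.isLinear g) _
  have hsub := convexHull_min hhalf hcvx
  have hlt : g (K.ρ u h) < f h := hsub hx
  have : g (K.ρ u h) = f h := by
    rw [hg_def, LinearMap.comp_apply, rho_inv_apply]
  rw [this] at hlt
  exact lt_irrefl _ hlt

/-- Elements of the standard subgroup move vectors within the coroot span of `J`. -/
lemma std_move (J : Set (Fin n)) :
    ∀ x ∈ K.std J, ∀ v : V, K.ρ x v - v ∈ Submodule.span ℝ (K.cor '' J) := by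
  intro x hx
  induction hx using Subgroup.closure_induction with
  | mem y hy =>
    obtain ⟨l, hl, rfl⟩ := hy
    intro v
    rw [K.refl]
    have : v - K.α l v • K.cor l - v = -(K.α l v • K.cor l) := by abel
    rw [this]
    exact Submodule.neg_mem _ (Submodule.smul_mem _ _
      (Submodule.subset_span ⟨l, hl, rfl⟩))
  | one =>
    intro v
    simp
  | mul y z _ _ hy hz =>
    intro v
    have : K.ρ (y * z) v - v = (K.ρ y (K.ρ z v) - K.ρ z v) + (K.ρ z v - v) := by
      rw [map_mul, Module.End.mul_apply]; abel
    rw [this]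
    exact Submodule.add_mem _ (hy _) (hz _)
  | inv y _ hy =>
    intro v
    have : K.ρ y⁻¹ v - v = -(K.ρ y (K.ρ y⁻¹ v) - K.ρ y⁻¹ v) := by
      rw [← Module.End.mul_apply, ← map_mul, mul_inv_cancel, map_one, Module.End.one_apply]
      abel
    rw [this]
    exact Submodule.neg_mem _ (hy _)

/-- A simple reflection lies in the standard subgroup iff its index lies in `J`. -/
lemma simple_mem_std_iff (hC : ∀ i, 0 < K.α i h) (J : Set (Fin n)) (i : Fin n) :
    K.cs.simple i ∈ K.std J ↔ i ∈ J := by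
  constructor
  · intro hmem
    have hspan := std_move K J _ hmem h
    rw [K.refl] at hspan
    have heq : h - K.α i h • K.cor i - h = -(K.α i h • K.cor i) := by abel
    rw [heq] at hspan
    have hsmul : K.α i h • K.cor i ∈ Submodule.span ℝ (K.cor '' J) := by
      have := Submodule.neg_mem _ hspan
      rwa [neg_neg] at this
    have hcor : K.cor i ∈ Submodule.span ℝ (K.cor '' J) := by
      have := Submodule.smul_mem _ (K.α i h)⁻¹ hsmul
      rwa [smul_smul, inv_mul_cancel₀ (ne_of_gt (hC i)), one_smul] at this
    by_contra hiJ
    exact K.cofree.notMem_span_image hiJ hcor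
  · intro hi
    exact Subgroup.subset_closure ⟨i, hi, rfl⟩

/-- Two standard cosets are equal iff the indexing sets agree and `w⁻¹w'` lies in the
standard subgroup. -/
lemma coset_iff (hC : ∀ i, 0 < K.α i h) (w w' : W) (J J' : Set (Fin n)) :
    ((fun x => w * x) '' (K.std J : Set W) = (fun x => w' * x) '' (K.std J' : Set W)) ↔
      (J = J' ∧ w⁻¹ * w' ∈ K.std J) := by
  constructor
  · intro hS
    have hw' : w' ∈ (fun x => w * x) '' (K.std J : Set W) := by
      rw [hS]
      exact ⟨1, (K.std J').one_mem, mul_one w'⟩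
    obtain ⟨x₀, hx₀, hwx⟩ := hw'
    simp only at hwx
    have hx : w⁻¹ * w' = x₀ := by rw [← hwx]; group
    have hmemiff : ∀ y : W, y ∈ K.std J' ↔ y ∈ K.std J := by
      intro y
      constructor
      · intro hy
        have hmem : w' * y ∈ (fun x => w' * x) '' (K.std J' : Set W) := ⟨y, hy, rfl⟩
        rw [← hS] at hmem
        obtain ⟨z, hz, hzz⟩ := hmem
        simp only at hzz
        have hzy : z = x₀ * y := by
          apply mul_left_cancel (a := w)
          rw [hzz, ← mul_assoc, hwx]
        rw [hzy] at hz
        exact ((K.std J).mul_mem_cancel_left hx₀).mp hz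
      · intro hy
        have hmem : w * (x₀ * y) ∈ (fun x => w * x) '' (K.std J : Set W) :=
          ⟨x₀ * y, (K.std J).mul_mem hx₀ hy, rfl⟩
        rw [hS] at hmem
        obtain ⟨z, hz, hzz⟩ := hmem
        simp only at hzz
        have hzy : z = y := by
          apply mul_left_cancel (a := w')
          rw [hzz, ← mul_assoc, hwx]
        rwa [hzy] at hz
    refine ⟨?_, hx ▸ hx₀⟩
    ext i
    rw [← simple_mem_std_iff K h hC J i, ← simple_mem_std_iff K h hC J' i]
    exact (hmemiff (K.cs.simple i)).symm
  · rintro ⟨rfl, hx⟩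
    ext y
    constructor
    · rintro ⟨z, hz, rfl⟩
      refine ⟨(w⁻¹ * w')⁻¹ * z, (K.std J).mul_mem ((K.std J).inv_mem hx) hz, ?_⟩
      simp only
      group
    · rintro ⟨z, hz, rfl⟩
      refine ⟨(w⁻¹ * w') * z, (K.std J).mul_mem hx hz, ?_⟩
      simp only
      group

end KMAux

/-- For `h` in the open chamber, `conv(wW_J·h) = conv(w'W_{J'}·h)` iff `J = J'` and
`w⁻¹w' ∈ W_J`, i.e. iff the two standard cosets coincide. -/
theorem stmt_9 {n : ℕ} {V : Type*} [AddCommGroup V] [Module ℝ V]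
    {W : Type*} [Group W] {M : CoxeterMatrix (Fin n)} (K : KMWeyl n V W M)
    (h : V) (hC : ∀ i, 0 < K.α i h)
    (w w' : W) (J J' : Set (Fin n)) :
    (cosetFace K h w J = cosetFace K h w' J' ↔ (J = J' ∧ w⁻¹ * w' ∈ K.std J)) ∧
    (cosetFace K h w J = cosetFace K h w' J' ↔
      (fun x => w * x) '' (K.std J : Set W) = (fun x => w' * x) '' (K.std J' : Set W)) := by
  obtain ⟨f, hf⟩ := KMAux.exists_functional K
  have main : cosetFace K h w J = cosetFace K h w' J' ↔
      (fun x => w * x) '' (K.std J : Set W) = (fun x => w' * x) '' (K.std J' : Set W) := by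
    constructor
    · intro hEq
      apply Set.Subset.antisymm
      · exact KMAux.hull_subset_coset K h hC hf hEq.subset
      · exact KMAux.hull_subset_coset K h hC hf hEq.symm.subset
    · intro hEq
      unfold cosetFace
      rw [hEq]
  exact ⟨main.trans (KMAux.coset_iff K h hC w w' J J'), main⟩
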